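/- Let G be a group containing a normal, non-abelian maximal subgroup M, and a maximal subgroup K with K ∩ M = Z(M). Then, writing Ĝ := G/Z(M), M̂ := M/Z(M) and K̂ := K/Z(M) (noting Z(M) ≤ K), the following hold: K̂ is a core-free maximal subgroup of Ĝ (so Ĝ is a primitive group); M̂ is the unique minimal normal subgroup of Ĝ; Ĝ = M̂ K̂ with M̂ ∩ K̂ trivial; and K̂ has prime order. -/

import Mathlib

open Subgroup

namespace NC

variable {G : Type*} [Group G]

/-- The centre of a subgroup `H`, realised as a subgroup of the ambient group `G`. -/
def centerOf (H : Subgroup G) : Subgroup G := H ⊓ Subgroup.centralizer (H : Set G)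

/-- `H` is a maximal subgroup of `K` (both subgroups of the ambient group `G`). -/
def IsMaximalIn (H K : Subgroup G) : Prop :=
  H < K ∧ ∀ T : Subgroup G, H < T → T ≤ K → T = K

/-- The non-commuting, non-generating graph of `G`: vertices `x, y` are adjacent
iff they do not commute and do not generate `G`.  (Central elements are isolated
vertices here; the paper simply removes them from the vertex set.) -/
def ncGraph (G : Type*) [Group G] : SimpleGraph G where
  Adj x y := x * y ≠ y * x ∧ Subgroup.closure {x, y} ≠ ⊤
  symm := by
    constructor
    intro x y h
    exact ⟨fun e => h.1 e.symm, by rw [Set.pair_comm]; exact h.2⟩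
  loopless := by
    constructor
    intro x h
    exact h.1 rfl

/-- The conjugate `g H g⁻¹` of a subgroup `H` by an element `g`. -/
def conjSub (g : G) (H : Subgroup G) : Subgroup G := H.map (MulAut.conj g).toMonoidHom

/-- "The quotient of `G` by the subgroup `H` is cyclic": every coset of `H` is a
power of a fixed coset.  For `H` normal this says exactly that `G/H` is cyclic. -/
def QuotCyclic (H : Subgroup G) : Prop := ∃ g : G, ∀ x : G, ∃ n : ℤ, x⁻¹ * g ^ n ∈ H

/-- `P` is a Sylow `p`-subgroup of `G`. -/
def IsSylowIn (p : ℕ) (P : Subgroup G) : Prop :=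
  IsPGroup p P ∧ ∀ R : Subgroup G, IsPGroup p R → P ≤ R → R = P

/-- The Frattini subgroup of a subgroup `P` (the intersection of the maximal
subgroups of `P`), realised as a subgroup of the ambient group. -/
def phiIn (P : Subgroup G) : Subgroup G := P ⊓ sInf {W : Subgroup G | IsMaximalIn W P}

/-- `G` has exactly two conjugacy classes of maximal subgroups. -/
def TwoMaxClasses (G : Type*) [Group G] : Prop :=
  ∃ K L : Subgroup G, IsCoatom K ∧ IsCoatom L ∧ (∀ g : G, conjSub g K ≠ L) ∧
    ∀ T : Subgroup G, IsCoatom T → (∃ g : G, T = conjSub g K) ∨ (∃ g : G, T = conjSub g L)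

/-- The induced subgraph of the non-commuting, non-generating graph on the
actual vertex set `G \ Z(G)`. -/
def ncSubgraph (G : Type*) [Group G] := (ncGraph G).induce {x : G | x ∉ Subgroup.center G}

open scoped Pointwise

lemma aux_mem_sup {N H : Subgroup G} (hN : N.Normal) {g : G} (hg : g ∈ N ⊔ H) :
    ∃ n ∈ N, ∃ h ∈ H, g = n * h := by
  haveI := hN
  have h1 : g ∈ (N : Set G) * (H : Set G) := by rw [← Subgroup.normal_mul]; exact hg
  obtain ⟨n, hn, h, hh, he⟩ := Set.mem_mul.1 h1
  exact ⟨n, hn, h, hh, he.symm⟩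

lemma centerOf_normal {M : Subgroup G} (hMn : M.Normal) : (centerOf M).Normal := by
  constructor
  intro n hn g
  obtain ⟨hnM, hnc⟩ := Subgroup.mem_inf.1 hn
  refine Subgroup.mem_inf.2 ⟨hMn.conj_mem n hnM g, Subgroup.mem_centralizer_iff.2 ?_⟩
  intro m hm
  have hm' : g⁻¹ * m * g ∈ M := by
    have := hMn.conj_mem m hm g⁻¹
    simpa [mul_assoc] using this
  have hc : (g⁻¹ * m * g) * n = n * (g⁻¹ * m * g) :=
    Subgroup.mem_centralizer_iff.1 hnc _ hm'
  calc m * (g * n * g⁻¹) = g * ((g⁻¹ * m * g) * n) * g⁻¹ := by group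
    _ = g * (n * (g⁻¹ * m * g)) * g⁻¹ := by rw [hc]
    _ = g * n * g⁻¹ * m := by group

lemma aux_comm {M Z : Subgroup G} (hZn : Z.Normal) (hZM : Z ≤ M)
    (hZcent : ∀ z ∈ Z, ∀ m ∈ M, m * z = z * m) {m₀ : G} (hm₀ : m₀ ∈ M)
    (hle : M ≤ Z ⊔ Subgroup.zpowers m₀) :
    ∀ a ∈ M, ∀ b ∈ M, a * b = b * a := by
  have key : ∀ z ∈ Z, ∀ (k k' : ℤ), ∀ z' ∈ Z,
      (z * m₀ ^ k) * (z' * m₀ ^ k') = (z * z') * m₀ ^ (k + k') := by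
    intro z hz k k' z' hz'
    have h1 : m₀ ^ k * z' = z' * m₀ ^ k := hZcent z' hz' _ (M.zpow_mem hm₀ k)
    calc z * m₀ ^ k * (z' * m₀ ^ k')
        = z * (m₀ ^ k * z') * m₀ ^ k' := by simp [mul_assoc]
      _ = z * (z' * m₀ ^ k) * m₀ ^ k' := by rw [h1]
      _ = z * z' * m₀ ^ (k + k') := by simp [mul_assoc, zpow_add]
  intro a ha b hb
  obtain ⟨z₁, hz₁, s₁, hs₁, he₁⟩ := aux_mem_sup hZn (hle ha)
  obtain ⟨z₂, hz₂, s₂, hs₂, he₂⟩ := aux_mem_sup hZn (hle hb)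
  obtain ⟨k₁, hk₁⟩ := Subgroup.mem_zpowers_iff.1 hs₁
  obtain ⟨k₂, hk₂⟩ := Subgroup.mem_zpowers_iff.1 hs₂
  subst he₁; subst he₂; subst hk₁; subst hk₂
  have hzz : z₁ * z₂ = z₂ * z₁ := hZcent z₂ hz₂ z₁ (hZM hz₁)
  rw [key z₁ hz₁ k₁ k₂ z₂ hz₂, key z₂ hz₂ k₂ k₁ z₁ hz₁, hzz, add_comm]

lemma aux_relIndex {M K : Subgroup G} (hMn : M.Normal) (h : M ⊔ K = ⊤) :
    M.relIndex K = M.index := by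
  haveI := hMn
  have hsurj : Function.Surjective ((QuotientGroup.mk' M).comp K.subtype) := by
    intro q
    obtain ⟨g, rfl⟩ := QuotientGroup.mk'_surjective M q
    have hg : g ∈ K ⊔ M := by rw [sup_comm M K] at h; rw [h]; exact Subgroup.mem_top g
    have hg' : g ∈ (K : Set G) * (M : Set G) := by rw [← Subgroup.mul_normal]; exact hg
    obtain ⟨k, hk, m, hm, he⟩ := Set.mem_mul.1 hg'
    refine ⟨⟨k, hk⟩, ?_⟩
    show ((k : G) : G ⧸ M) = (g : G ⧸ M)
    rw [QuotientGroup.eq]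
    have : k⁻¹ * g = m := by rw [← he]; group
    rw [this]; exact hm
  have hker : ((QuotientGroup.mk' M).comp K.subtype).ker = M.subgroupOf K := by
    ext x
    simp [MonoidHom.mem_ker, Subgroup.mem_subgroupOf, QuotientGroup.eq_one_iff]
  calc M.relIndex K = (M.subgroupOf K).index := rfl
    _ = Nat.card (K ⧸ ((QuotientGroup.mk' M).comp K.subtype).ker) := by
        rw [hker, Subgroup.index_eq_card]
    _ = Nat.card (G ⧸ M) :=
        Nat.card_congr (QuotientGroup.quotientKerEquivOfSurjective _ hsurj).toEquiv
    _ = M.index := (Subgroup.index_eq_card M).symm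

lemma aux_index_prime {M : Subgroup G} (hM : IsCoatom M) (hMn : M.Normal) :
    M.index.Prime := by
  haveI := hMn
  have hsub : ∀ H : Subgroup (G ⧸ M), H = ⊥ ∨ H = ⊤ := by
    intro H
    have hle : M ≤ H.comap (QuotientGroup.mk' M) := by
      intro m hm
      have h1 : (QuotientGroup.mk' M) m = 1 := (QuotientGroup.eq_one_iff m).2 hm
      rw [Subgroup.mem_comap, h1]
      exact H.one_mem
    rcases eq_or_lt_of_le hle with h | h
    · left
      apply Subgroup.comap_injective (QuotientGroup.mk'_surjective M)
      rw [MonoidHom.comap_bot, QuotientGroup.ker_mk', ← h]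
    · right
      apply Subgroup.comap_injective (QuotientGroup.mk'_surjective M)
      rw [Subgroup.comap_top, hM.2 _ h]
  have hnt : Nontrivial (G ⧸ M) := by
    obtain ⟨x, hx⟩ : ∃ x, x ∉ M := by
      by_contra hcon; push_neg at hcon
      exact hM.1 (top_unique fun g _ => hcon g)
    exact ⟨(x : G ⧸ M), 1, fun hcc => hx ((QuotientGroup.eq_one_iff x).1 hcc)⟩
  obtain ⟨g, hg⟩ := exists_ne (1 : G ⧸ M)
  have htop : ∀ x : G ⧸ M, x ≠ 1 → Subgroup.zpowers x = ⊤ := fun x hx =>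
    (hsub _).resolve_left (Subgroup.zpowers_ne_bot.2 hx)
  have hfin : IsOfFinOrder g := by
    by_contra hinf
    have h2 : g * g ≠ 1 := by
      intro hcc
      exact hinf (isOfFinOrder_iff_pow_eq_one.2 ⟨2, two_pos, by rwa [pow_two]⟩)
    have hgmem : g ∈ Subgroup.zpowers (g * g) := by
      rw [htop _ h2]; exact Subgroup.mem_top g
    obtain ⟨k, hk⟩ := Subgroup.mem_zpowers_iff.1 hgmem
    apply hinf
    rw [isOfFinOrder_iff_zpow_eq_one]
    refine ⟨k + k - 1, by omega, ?_⟩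
    have h3 : g ^ (k + k) = g := by
      rw [zpow_add, ← (Commute.refl g).mul_zpow]; exact hk
    rw [zpow_sub, h3, zpow_one, mul_inv_cancel]
  have hn0 : orderOf g ≠ 0 := hfin.orderOf_pos.ne'
  have hn1 : orderOf g ≠ 1 := fun hcc => hg (orderOf_eq_one_iff.1 hcc)
  set p := (orderOf g).minFac with hp'
  have hp : p.Prime := Nat.minFac_prime hn1
  set h := g ^ (orderOf g / p) with hh
  have hordh : orderOf h = p := by
    rw [hh, hfin.orderOf_pow, Nat.gcd_eq_right (Nat.div_dvd_of_dvd (Nat.minFac_dvd _)),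
      Nat.div_div_self (Nat.minFac_dvd _) hn0]
  have hh1 : h ≠ 1 := by
    intro hcc
    rw [hcc, orderOf_one] at hordh
    exact hp.ne_one hordh.symm
  have hcard : M.index = p := by
    rw [Subgroup.index_eq_card, ← Subgroup.card_top, ← htop h hh1, Nat.card_zpowers, hordh]
  rw [hcard]; exact hp

/-- STATEMENT 14 (Proposition 4.6(i) / `prop:gkzmprim`), phrased in the ambient
group via the correspondence between subgroups of `G/Z(M)` and subgroups of `G`
containing `Z(M)`. -/
theorem statement_14 {M K : Subgroup G} (hM : IsCoatom M) (hMn : M.Normal)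
    (hMna : ∃ a ∈ M, ∃ b ∈ M, a * b ≠ b * a)
    (hK : IsCoatom K) (hKM : K ⊓ M = centerOf M) :
    centerOf M ≤ K ∧
      (∀ N : Subgroup G, N.Normal → N ≤ K → N ≤ centerOf M) ∧
      centerOf M < M ∧
      (∀ N : Subgroup G, N.Normal → centerOf M ≤ N → N ≠ centerOf M → M ≤ N) ∧
      M ⊔ K = ⊤ ∧
      ∃ p : ℕ, p.Prime ∧ (centerOf M).relIndex K = p := by
  rw [← hKM]
  have hZcent : ∀ z ∈ K ⊓ M, ∀ m ∈ M, m * z = z * m := by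
    intro z hz m hm
    have hz' : z ∈ centerOf M := hKM ▸ hz
    exact Subgroup.mem_centralizer_iff.1 (Subgroup.mem_inf.1 hz').2 m hm
  have hZn : (K ⊓ M).Normal := by rw [hKM]; exact centerOf_normal hMn
  have hZltM : K ⊓ M < M := by
    obtain ⟨a, ha, b, hb, hab⟩ := hMna
    refine lt_of_le_of_ne inf_le_right (fun hcc => hab ?_)
    have haZ : a ∈ K ⊓ M := hcc.symm ▸ ha
    exact (hZcent a haZ b hb).symm
  have hKneM : K ≠ M := by
    intro hcc
    rw [hcc, inf_idem] at hZltM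
    exact lt_irrefl _ hZltM
  have hKnleM : ¬ K ≤ M := by
    intro hle
    rcases hle.lt_or_eq with h1 | h1
    · exact hM.1 (hK.2 _ h1)
    · exact hKneM h1
  have hsup : M ⊔ K = ⊤ := by
    rcases (le_sup_left : M ≤ M ⊔ K).lt_or_eq with h | h
    · exact hM.2 _ h
    · exact absurd (h ▸ le_sup_right : K ≤ M) hKnleM
  have hip : M.index.Prime := aux_index_prime hM hMn
  have hrel : (K ⊓ M).relIndex K = M.index := by
    rw [Subgroup.inf_relIndex_left, aux_relIndex hMn hsup]
  -- minimality between Z and M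
  have hmin : ∀ N : Subgroup G, N.Normal → K ⊓ M ≤ N → N ≤ M → N = K ⊓ M ∨ N = M := by
    intro N hNn hZN hNM
    by_cases hNK : N ≤ K
    · exact Or.inl (le_antisymm (le_inf hNK hNM) hZN)
    · right
      have hKN : N ⊔ K = ⊤ := by
        rcases (le_sup_right : K ≤ N ⊔ K).lt_or_eq with h | h
        · exact hK.2 _ h
        · exact absurd (h ▸ le_sup_left : N ≤ K) hNK
      refine le_antisymm hNM (fun m hm => ?_)
      have hm' : m ∈ N ⊔ K := by rw [hKN]; exact Subgroup.mem_top m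
      obtain ⟨n, hn, k, hk, he⟩ := aux_mem_sup hNn hm'
      have hkM : k ∈ M := by
        have hkk : k = n⁻¹ * m := by rw [he]; group
        rw [hkk]; exact M.mul_mem (M.inv_mem (hNM hn)) hm
      rw [he]
      exact N.mul_mem hn (hZN (Subgroup.mem_inf.2 ⟨hk, hkM⟩))
  -- the main (hard) statement: unique minimal normal above Z
  have part4 : ∀ N : Subgroup G, N.Normal → K ⊓ M ≤ N → N ≠ K ⊓ M → M ≤ N := by
    intro N hNn hZN hNne
    have hNMn : (N ⊓ M).Normal := by
      haveI := hNn; haveI := hMn; infer_instance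
    rcases hmin (N ⊓ M) hNMn (le_inf hZN inf_le_right) inf_le_right with hcase | hcase
    · exfalso
      have hNnleM : ¬ N ≤ M := by
        intro hle
        exact hNne ((inf_eq_left.mpr hle).symm.trans hcase)
      have hNMtop : N ⊔ M = ⊤ := by
        rcases (le_sup_right : M ≤ N ⊔ M).lt_or_eq with h | h
        · exact hM.2 _ h
        · exact absurd (h ▸ le_sup_left : N ≤ M) hNnleM
      obtain ⟨k₀, hk₀K, hk₀M⟩ : ∃ k, k ∈ K ∧ k ∉ M := by
        by_contra hcon; push_neg at hcon
        exact hKnleM (fun x hx => hcon x hx)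
      -- K = Z ⊔ ⟨k₀⟩
      have hKeq : K = (K ⊓ M) ⊔ Subgroup.zpowers k₀ := by
        set H := (K ⊓ M) ⊔ Subgroup.zpowers k₀ with hH
        have hHK : H ≤ K := sup_le inf_le_left (Subgroup.zpowers_le.2 hk₀K)
        have h1 : (K ⊓ M).relIndex H * H.relIndex K = M.index := by
          rw [← hrel]; exact Subgroup.relIndex_mul_relIndex _ _ _ le_sup_left hHK
        have hd : H.relIndex K ∣ M.index := ⟨(K ⊓ M).relIndex H, by rw [← h1, mul_comm]⟩
        rcases hip.eq_one_or_self_of_dvd _ hd with h2 | h2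
        · exact le_antisymm (Subgroup.relIndex_eq_one.1 h2) hHK
        · exfalso
          have h3 : (K ⊓ M).relIndex H = 1 := by
            have h4 := h1
            rw [h2] at h4
            exact Nat.eq_of_mul_eq_mul_right hip.pos (by rw [one_mul]; exact h4)
          have hle := Subgroup.relIndex_eq_one.1 h3
          have hk₀H : k₀ ∈ H := (le_sup_right : Subgroup.zpowers k₀ ≤ H) (Subgroup.mem_zpowers k₀)
          exact hk₀M (Subgroup.mem_inf.1 (hle hk₀H)).2
      have hk₀top : k₀ ∈ N ⊔ M := by rw [hNMtop]; exact Subgroup.mem_top k₀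
      obtain ⟨n₀, hn₀, m₀, hm₀, he₀⟩ := aux_mem_sup hNn hk₀top
      set T := N ⊔ Subgroup.zpowers m₀ with hT
      have hKT : K ≤ T := by
        rw [hKeq]
        refine sup_le (hZN.trans le_sup_left) (Subgroup.zpowers_le.2 ?_)
        rw [he₀]
        exact T.mul_mem ((le_sup_left : N ≤ T) hn₀)
          ((le_sup_right : Subgroup.zpowers m₀ ≤ T) (Subgroup.mem_zpowers m₀))
      obtain ⟨a, ha, b, hb, hab⟩ := hMna
      rcases hKT.lt_or_eq with hlt | heq
      · have hTtop : T = ⊤ := hK.2 _ hlt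
        have hMle : M ≤ (K ⊓ M) ⊔ Subgroup.zpowers m₀ := by
          intro m hm
          have hmT : m ∈ N ⊔ Subgroup.zpowers m₀ := by rw [← hT, hTtop]; exact Subgroup.mem_top m
          obtain ⟨n, hn, s, hs, he⟩ := aux_mem_sup hNn hmT
          have hsM : s ∈ M := Subgroup.zpowers_le.2 hm₀ hs
          have hnM : n ∈ M := by
            have hnn : n = m * s⁻¹ := by rw [he]; group
            rw [hnn]; exact M.mul_mem hm (M.inv_mem hsM)
          have hnZ : n ∈ K ⊓ M := hcase ▸ Subgroup.mem_inf.2 ⟨hn, hnM⟩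
          rw [he]
          exact Subgroup.mul_mem _ ((le_sup_left : K ⊓ M ≤ _) hnZ)
            ((le_sup_right : Subgroup.zpowers m₀ ≤ _) hs)
        exact hab (aux_comm hZn inf_le_right hZcent hm₀ hMle a ha b hb)
      · -- T = K, so N ≤ K, then K = N is normal
        have hNK : N ≤ K := (le_sup_left : N ≤ T).trans heq.ge
        have hKN : K = N := by
          refine le_antisymm (fun k hk => ?_) hNK
          have hk' : k ∈ N ⊔ M := by rw [hNMtop]; exact Subgroup.mem_top k
          obtain ⟨n, hn, m, hm, he⟩ := aux_mem_sup hNn hk'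
          have hmK : m ∈ K := by
            have hmm : m = n⁻¹ * k := by rw [he]; group
            rw [hmm]; exact K.mul_mem (K.inv_mem (hNK hn)) hk
          have hmN : m ∈ N := hZN (Subgroup.mem_inf.2 ⟨hmK, hm⟩)
          rw [he]; exact N.mul_mem hn hmN
        have hKnormal : K.Normal := by rw [hKN]; exact hNn
        have haK : a ∉ K := fun hh => hab ((hZcent a (Subgroup.mem_inf.2 ⟨hh, ha⟩) b hb).symm)
        have hsupa : K ⊔ Subgroup.zpowers a = ⊤ := by
          rcases (le_sup_left : K ≤ K ⊔ Subgroup.zpowers a).lt_or_eq with h | h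
          · exact hK.2 _ h
          · exact absurd ((h ▸ (le_sup_right : Subgroup.zpowers a ≤ _)) (Subgroup.mem_zpowers a)) haK
        have hMle : M ≤ (K ⊓ M) ⊔ Subgroup.zpowers a := by
          intro m hm
          have hm' : m ∈ K ⊔ Subgroup.zpowers a := by rw [hsupa]; exact Subgroup.mem_top m
          obtain ⟨k, hk, s, hs, he⟩ := aux_mem_sup hKnormal hm'
          have hsM : s ∈ M := Subgroup.zpowers_le.2 ha hs
          have hkM : k ∈ M := by
            have hkk : k = m * s⁻¹ := by rw [he]; group
            rw [hkk]; exact M.mul_mem hm (M.inv_mem hsM)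
          rw [he]
          exact Subgroup.mul_mem _ ((le_sup_left : K ⊓ M ≤ _) (Subgroup.mem_inf.2 ⟨hk, hkM⟩))
            ((le_sup_right : Subgroup.zpowers a ≤ _) hs)
        exact hab (aux_comm hZn inf_le_right hZcent ha hMle a ha b hb)
    · intro m hm
      exact (Subgroup.mem_inf.1 (hcase.symm ▸ hm)).1
  have part2 : ∀ N : Subgroup G, N.Normal → N ≤ K → N ≤ K ⊓ M := by
    intro N hNn hNK
    have hNZn : (N ⊔ (K ⊓ M)).Normal := by
      haveI := hNn; haveI := hZn; infer_instance
    by_cases hne : N ⊔ (K ⊓ M) = K ⊓ M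
    · exact le_sup_left.trans hne.le
    · exfalso
      have hMle : M ≤ N ⊔ (K ⊓ M) := part4 _ hNZn le_sup_right hne
      have hMK : M ≤ K := hMle.trans (sup_le hNK inf_le_left)
      exact hZltM.ne (le_antisymm hZltM.le (le_inf hMK le_rfl))
  exact ⟨inf_le_left, part2, hZltM, part4, hsup, M.index, hip, hrel⟩


end NC
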